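/- Let k be a field and let A be an invertible d×d matrix over k. Then there exist invertible upper-triangular d×d matrices T and T' over k such that T'·A·T is a permutation matrix. Equivalently, A can be transformed into a permutation matrix using only the following elementary operations: multiplying a row or column by a nonzero scalar, adding a scalar multiple of a row to a row above it, and adding a scalar multiple of a column to a column to its right. -/

import Mathlib

open Matrix Finset

namespace Statement12Aux

variable {k : Type} [Field k] {d : ℕ}

/-- Embed a `d × d` matrix into `(d+1) × (d+1)` putting a `1` in position `(i,i)`. -/
def liftA (i : Fin (d+1)) (M : Matrix (Fin d) (Fin d) k) :
    Matrix (Fin (d+1)) (Fin (d+1)) k :=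
  Matrix.of fun a b =>
    match finSuccEquiv' i a, finSuccEquiv' i b with
    | none, none => 1
    | none, some _ => 0
    | some _, none => 0
    | some a', some b' => M a' b'

@[simp] lemma liftA_self_self (i : Fin (d+1)) (M : Matrix (Fin d) (Fin d) k) :
    liftA i M i i = 1 := by
  simp [liftA, finSuccEquiv'_at]

@[simp] lemma liftA_self_succAbove (i : Fin (d+1)) (M : Matrix (Fin d) (Fin d) k) (b : Fin d) :
    liftA i M i (i.succAbove b) = 0 := by
  simp [liftA, finSuccEquiv'_at, finSuccEquiv'_succAbove]

@[simp] lemma liftA_succAbove_self (i : Fin (d+1)) (M : Matrix (Fin d) (Fin d) k) (a : Fin d) :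
    liftA i M (i.succAbove a) i = 0 := by
  simp [liftA, finSuccEquiv'_at, finSuccEquiv'_succAbove]

@[simp] lemma liftA_succAbove_succAbove (i : Fin (d+1)) (M : Matrix (Fin d) (Fin d) k)
    (a b : Fin d) : liftA i M (i.succAbove a) (i.succAbove b) = M a b := by
  simp [liftA, finSuccEquiv'_at, finSuccEquiv'_succAbove]

lemma fin_cases' (i a : Fin (d+1)) : i = a ∨ ∃ a', i.succAbove a' = a := by
  rcases eq_or_ne a i with h | h
  · exact Or.inl h.symm
  · exact Or.inr (Fin.exists_succAbove_eq h)

lemma liftA_mul (i : Fin (d+1)) (M N : Matrix (Fin d) (Fin d) k) :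
    liftA i M * liftA i N = liftA i (M * N) := by
  ext a b
  rw [mul_apply, Fin.sum_univ_succAbove _ i]
  rcases fin_cases' i a with rfl | ⟨a', rfl⟩ <;> rcases fin_cases' i b with rfl | ⟨b', rfl⟩ <;>
    simp [mul_apply]

lemma liftA_one (i : Fin (d+1)) : liftA i (1 : Matrix (Fin d) (Fin d) k) = 1 := by
  ext a b
  rcases fin_cases' i a with rfl | ⟨a', rfl⟩ <;> rcases fin_cases' i b with rfl | ⟨b', rfl⟩ <;>
    simp [one_apply, Fin.succAbove_ne, Fin.ne_succAbove, Fin.succAbove_right_inj]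

lemma liftA_isUnit {i : Fin (d+1)} {M : Matrix (Fin d) (Fin d) k} (h : IsUnit M) :
    IsUnit (liftA i M) := by
  obtain ⟨u, rfl⟩ := h
  refine isUnit_iff_exists.mpr ⟨liftA i ((u⁻¹ : _) : Matrix (Fin d) (Fin d) k), ?_, ?_⟩
  · rw [liftA_mul, Units.mul_inv, liftA_one]
  · rw [liftA_mul, Units.inv_mul, liftA_one]

lemma liftA_blockTriangular {i : Fin (d+1)} {M : Matrix (Fin d) (Fin d) k}
    (h : M.BlockTriangular id) : (liftA i M).BlockTriangular id := by
  intro a b hab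
  rcases fin_cases' i a with rfl | ⟨a', rfl⟩ <;> rcases fin_cases' i b with rfl | ⟨b', rfl⟩
  · exact absurd hab (lt_irrefl _)
  · simp
  · simp
  · simpa using h (Fin.succAbove_lt_succAbove_iff.mp hab)

lemma main : ∀ (d : ℕ) (A : Matrix (Fin d) (Fin d) k), IsUnit A →
    ∃ T T' : Matrix (Fin d) (Fin d) k,
      IsUnit T ∧ IsUnit T' ∧
      T.BlockTriangular id ∧ T'.BlockTriangular id ∧
      ∃ σ : Equiv.Perm (Fin d),
        T' * A * T = Matrix.of fun i j => if i = σ j then (1 : k) else 0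
  | 0, A, _ => ⟨1, 1, isUnit_one, isUnit_one, blockTriangular_one, blockTriangular_one, 1, by
      ext a b; exact a.elim0⟩
  | (d+1), A, hA => by
    classical
    have hdet : A.det ≠ 0 := by
      have := (Matrix.isUnit_iff_isUnit_det A).mp hA
      exact this.ne_zero
    -- the first column of `A` is nonzero
    have hcol : ∃ a, A a 0 ≠ 0 := by
      by_contra h
      push_neg at h
      exact hdet (Matrix.det_eq_zero_of_column_eq_zero 0 h)
    set S : Finset (Fin (d+1)) := Finset.univ.filter (fun a => A a 0 ≠ 0) with hS
    have hSne : S.Nonempty := by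
      obtain ⟨a, ha⟩ := hcol
      exact ⟨a, by simp [hS, ha]⟩
    set i : Fin (d+1) := S.max' hSne with hidef
    have hi : A i 0 ≠ 0 := by
      have := S.max'_mem hSne
      simpa [hS] using this
    have hmax : ∀ a, i < a → A a 0 = 0 := by
      intro a ha
      by_contra h
      exact absurd (S.le_max' a (by simp [hS, h])) (not_le.mpr ha)
    -- Row operations: L is upper triangular, (L*A) has first column = e_i
    set L : Matrix (Fin (d+1)) (Fin (d+1)) k := Matrix.of fun a b =>
      (if a = b then (if a = i then (A i 0)⁻¹ else 1) else 0) +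
      (if b = i ∧ a < i then -(A a 0) * (A i 0)⁻¹ else 0) with hLdef
    have hL_entry : ∀ a j, (L * A) a j =
        (if a = i then (A i 0)⁻¹ else 1) * A a j +
        (if a < i then (-(A a 0) * (A i 0)⁻¹) * A i j else 0) := by
      intro a j
      rw [mul_apply]
      simp only [hLdef, Matrix.of_apply, add_mul, ite_mul, zero_mul]
      rw [Finset.sum_add_distrib, Finset.sum_ite_eq Finset.univ a, if_pos (Finset.mem_univ a)]
      congr 1
      by_cases h : a < i <;> simp [h, Finset.sum_ite_eq']
    set B : Matrix (Fin (d+1)) (Fin (d+1)) k := L * A with hBdef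
    have hBi0 : B i 0 = 1 := by
      rw [hL_entry]
      simp [inv_mul_cancel₀ hi]
    have hBa0 : ∀ a, a ≠ i → B a 0 = 0 := by
      intro a ha
      rw [hL_entry, if_neg ha]
      rcases lt_or_gt_of_ne ha with h | h
      · rw [if_pos h, mul_assoc, inv_mul_cancel₀ hi]
        ring
      · rw [if_neg (not_lt.mpr h.le), hmax a h]
        ring
    -- Column operations: R is upper triangular, C = B*R has row i = e_0
    set R : Matrix (Fin (d+1)) (Fin (d+1)) k := Matrix.of fun b j =>
      (if b = j then 1 else 0) + (if b = 0 ∧ j ≠ 0 then -(B i j) else 0) with hRdef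
    have hR_entry : ∀ a j, (B * R) a j =
        B a j + (if j ≠ 0 then B a 0 * (-(B i j)) else 0) := by
      intro a j
      rw [mul_apply]
      simp only [hRdef, Matrix.of_apply, mul_add, mul_ite, mul_one, mul_zero]
      rw [Finset.sum_add_distrib, Finset.sum_ite_eq' Finset.univ j, if_pos (Finset.mem_univ j)]
      congr 1
      by_cases h : j = 0 <;> simp [h, Finset.sum_ite_eq']
    set C : Matrix (Fin (d+1)) (Fin (d+1)) k := B * R with hCdef
    have hC0 : ∀ a, C a 0 = B a 0 := by
      intro a; rw [hR_entry]; simp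
    have hCi0 : C i 0 = 1 := by rw [hC0, hBi0]
    have hCa0 : ∀ a, a ≠ i → C a 0 = 0 := fun a ha => by rw [hC0, hBa0 a ha]
    have hCij : ∀ j, j ≠ 0 → C i j = 0 := by
      intro j hj
      rw [hR_entry, if_pos hj, hBi0]
      ring
    -- triangularity and invertibility of L and R
    have hL_tri : L.BlockTriangular id := by
      intro a b hab
      simp only [hLdef, Matrix.of_apply]
      rw [if_neg (by exact fun h => absurd h (ne_of_gt hab)), if_neg]
      · ring
      · rintro ⟨rfl, h2⟩
        exact absurd hab (not_lt.mpr h2.le)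
    have hR_tri : R.BlockTriangular id := by
      intro a b hab
      simp only [hRdef, Matrix.of_apply]
      rw [if_neg (by exact fun h => absurd h (ne_of_gt hab)), if_neg]
      · ring
      · rintro ⟨rfl, -⟩
        exact absurd hab (by simp)
    have hL_unit : IsUnit L := by
      rw [Matrix.isUnit_iff_isUnit_det, Matrix.det_of_upperTriangular hL_tri,
        isUnit_iff_ne_zero]
      apply Finset.prod_ne_zero_iff.mpr
      intro a _
      have h2 : ¬(a = i ∧ a < i) := by rintro ⟨rfl, h⟩; exact absurd h (lt_irrefl _)
      simp only [hLdef, Matrix.of_apply, if_pos rfl, if_neg h2, add_zero]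
      by_cases h : a = i <;> simp [h, inv_ne_zero hi]
    have hR_unit : IsUnit R := by
      rw [Matrix.isUnit_iff_isUnit_det, Matrix.det_of_upperTriangular hR_tri,
        isUnit_iff_ne_zero]
      apply Finset.prod_ne_zero_iff.mpr
      intro a _
      have : ¬(a = 0 ∧ a ≠ 0) := by rintro ⟨rfl, h⟩; exact h rfl
      simp only [hRdef, Matrix.of_apply, if_pos rfl, if_neg this, add_zero]
      exact one_ne_zero
    have hC_unit : IsUnit C := (hL_unit.mul hA).mul hR_unit
    -- the minor of C
    set C' : Matrix (Fin d) (Fin d) k :=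
      Matrix.of fun a b => C (i.succAbove a) ((0 : Fin (d+1)).succAbove b) with hC'def
    have hC'sub : C' = C.submatrix i.succAbove Fin.succ := by
      ext a b
      simp [hC'def, Fin.succAbove_zero]
    have hC'unit : IsUnit C' := by
      rw [Matrix.isUnit_iff_isUnit_det, isUnit_iff_ne_zero]
      have hCdetne : C.det ≠ 0 := by
        have := (Matrix.isUnit_iff_isUnit_det C).mp hC_unit
        exact this.ne_zero
      have hexp : C.det = (-1) ^ (i : ℕ) * C i 0 * (C.submatrix i.succAbove Fin.succ).det := by
        rw [Matrix.det_succ_column_zero]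
        rw [Fin.sum_univ_succAbove _ i]
        have : ∀ a : Fin d, (-1 : k) ^ ((i.succAbove a : Fin (d+1)) : ℕ) *
            C (i.succAbove a) 0 * (C.submatrix (i.succAbove a).succAbove Fin.succ).det = 0 := by
          intro a
          rw [hCa0 _ (Fin.succAbove_ne i a)]
          ring
        simp only [this, Finset.sum_const_zero, add_zero]
      intro h
      rw [hexp, ← hC'sub, h, hCi0] at hCdetne
      simp at hCdetne
    -- induction hypothesis on the minor
    obtain ⟨T₀, T₀', hT₀u, hT₀'u, hT₀t, hT₀'t, σ', hσ'⟩ := main d C' hC'unit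
    -- assemble
    refine ⟨R * liftA 0 T₀, liftA i T₀' * L, hR_unit.mul (liftA_isUnit hT₀u),
      (liftA_isUnit hT₀'u).mul hL_unit, hR_tri.mul (liftA_blockTriangular hT₀t),
      (liftA_blockTriangular hT₀'t).mul hL_tri,
      (finSuccEquiv' (0 : Fin (d+1))).trans ((Equiv.optionCongr σ').trans (finSuccEquiv' i).symm),
      ?_⟩
    set σ : Equiv.Perm (Fin (d+1)) :=
      (finSuccEquiv' (0 : Fin (d+1))).trans ((Equiv.optionCongr σ').trans (finSuccEquiv' i).symm)
      with hσdef
    have hσ0 : σ 0 = i := by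
      simp only [hσdef, Equiv.trans_apply, finSuccEquiv'_at, Equiv.optionCongr_apply,
        Option.map_none, finSuccEquiv'_symm_none]
    have hσs : ∀ b, σ ((0 : Fin (d+1)).succAbove b) = i.succAbove (σ' b) := by
      intro b
      have h1 := finSuccEquiv'_succAbove (0 : Fin (d+1)) b
      simp only [hσdef, Equiv.trans_apply, h1, Equiv.optionCongr_apply,
        Option.map_some, finSuccEquiv'_symm_some]
    have hassoc : liftA i T₀' * L * A * (R * liftA 0 T₀) =
        liftA i T₀' * C * liftA 0 T₀ := by
      rw [hCdef, hBdef]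
      noncomm_ring
    rw [hassoc]
    -- entries of E := liftA i T₀' * C
    have hEi : ∀ c, (liftA i T₀' * C) i c = C i c := by
      intro c
      rw [mul_apply, Fin.sum_univ_succAbove _ i]
      simp
    have hEs : ∀ (a' : Fin d) c, (liftA i T₀' * C) (i.succAbove a') c =
        ∑ e, T₀' a' e * C (i.succAbove e) c := by
      intro a' c
      rw [mul_apply, Fin.sum_univ_succAbove _ i]
      simp
    ext a b
    rw [mul_apply, Fin.sum_univ_succAbove _ (0 : Fin (d+1))]
    rcases fin_cases' (0 : Fin (d+1)) b with rfl | ⟨b', rfl⟩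
    · -- first column
      simp only [liftA_self_self, mul_one, liftA_succAbove_self, mul_zero,
        Finset.sum_const_zero, add_zero]
      rcases fin_cases' i a with rfl | ⟨a', rfl⟩
      · rw [hEi, hCi0, Matrix.of_apply, if_pos hσ0.symm]
      · rw [hEs, Matrix.of_apply, if_neg]
        · have : ∀ e : Fin d, T₀' a' e * C (i.succAbove e) 0 = 0 := by
            intro e
            rw [hCa0 _ (Fin.succAbove_ne i e), mul_zero]
          simp [this]
        · rw [hσ0]
          exact Fin.succAbove_ne i a'
    · -- other columns
      simp only [liftA_self_succAbove, mul_zero, liftA_succAbove_succAbove, zero_add]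
      rcases fin_cases' i a with rfl | ⟨a', rfl⟩
      · have : ∀ c : Fin d, (liftA i T₀' * C) i ((0 : Fin (d+1)).succAbove c) * T₀ c b' = 0 := by
          intro c
          rw [hEi, hCij _ (Fin.succAbove_ne 0 c), zero_mul]
        rw [Matrix.of_apply, if_neg]
        · rw [Finset.sum_congr rfl fun c _ => this c, Finset.sum_const_zero]
        · rw [hσs]
          exact Fin.ne_succAbove i (σ' b')
      · have key : ∑ c, (liftA i T₀' * C) (i.succAbove a') ((0 : Fin (d+1)).succAbove c) * T₀ c b'
            = (T₀' * C' * T₀) a' b' := by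
          rw [mul_apply]
          refine Finset.sum_congr rfl fun c _ => ?_
          rw [hEs, mul_apply]
          rfl
        rw [key, hσ', Matrix.of_apply, Matrix.of_apply, hσs]
        simp [Fin.succAbove_right_inj]

end Statement12Aux

/-- Any invertible `d × d` matrix `A` over a field `k` can be written as
`T' * A * T = P` where `T`, `T'` are invertible upper-triangular matrices and `P` is a
permutation matrix. -/
theorem statement12 {k : Type} [Field k] {d : ℕ}
    (A : Matrix (Fin d) (Fin d) k) (hA : IsUnit A) :
    ∃ T T' : Matrix (Fin d) (Fin d) k,
      IsUnit T ∧ IsUnit T' ∧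
      T.BlockTriangular id ∧ T'.BlockTriangular id ∧
      ∃ σ : Equiv.Perm (Fin d),
        T' * A * T = Matrix.of fun i j => if i = σ j then (1 : k) else 0 := by
  exact Statement12Aux.main d A hA
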